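/- Let Σ be a fan in a lattice N, let ρ₀ be a ray not in Σ contained in the support of Σ, and let σ be the minimal cone of Σ containing ρ₀. Define the stellar subdivision Σ' of Σ at ρ₀ by replacing every cone τ ⊇ ρ₀ by the cones ρ₀ + δ for δ a face of τ not containing ρ₀ (keeping all cones not containing ρ₀). Then Σ' is a fan with the same support as Σ, and every cone of Σ' is contained in a cone of Σ. -/

import Mathlib

open Module

/-- A (strictly convex) rational polyhedral cone in `ℚⁿ`. -/
def IsRatPolyCone {n : ℕ} (σ : Set (Fin n → ℚ)) : Prop :=
  (∃ s : Finset (Fin n → ℤ), σ =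
    {x | ∃ c : (Fin n → ℤ) → ℚ, (∀ v, 0 ≤ c v) ∧
      x = ∑ v ∈ s, c v • (fun i => (v i : ℚ))}) ∧
  ∀ x ∈ σ, -x ∈ σ → x = 0

/-- `τ` is a face of `σ`. -/
def IsFaceOf {n : ℕ} (τ σ : Set (Fin n → ℚ)) : Prop :=
  ∃ u : (Fin n → ℚ) →ₗ[ℚ] ℚ, (∀ x ∈ σ, 0 ≤ u x) ∧ τ = {x ∈ σ | u x = 0}

/-- A fan: a finite collection of strictly convex rational polyhedral cones,
closed under taking faces, any two of which intersect in a common face. -/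
def IsFan {n : ℕ} (S : Set (Set (Fin n → ℚ))) : Prop :=
  S.Finite ∧
  (∀ σ ∈ S, IsRatPolyCone σ) ∧
  (∀ σ ∈ S, ∀ τ : Set (Fin n → ℚ), IsFaceOf τ σ → τ ∈ S) ∧
  (∀ σ ∈ S, ∀ τ ∈ S, IsFaceOf (σ ∩ τ) σ ∧ IsFaceOf (σ ∩ τ) τ)

/-- A rational ray: the nonnegative multiples of a nonzero lattice vector. -/
def IsRay {n : ℕ} (ρ : Set (Fin n → ℚ)) : Prop :=
  ∃ v : Fin n → ℤ, (fun i => (v i : ℚ)) ≠ 0 ∧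
    ρ = {x | ∃ c : ℚ, 0 ≤ c ∧ x = c • (fun i => (v i : ℚ))}

namespace Stellar

variable {n : ℕ}

abbrev V (n : ℕ) := Fin n → ℚ

/-- The cone generated by a finite set of rational vectors. -/
def qcone (s : Finset (V n)) : Set (V n) :=
  {x | ∃ c : V n → ℚ, (∀ v, 0 ≤ c v) ∧ x = ∑ v ∈ s, c v • v}

lemma zero_mem_qcone (s : Finset (V n)) : (0 : V n) ∈ qcone s :=
  ⟨0, fun _ => le_rfl, by simp⟩

lemma mem_qcone_of_mem {s : Finset (V n)} {v : V n} (hv : v ∈ s) : v ∈ qcone s := by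
  classical
  refine ⟨fun w => if w = v then 1 else 0, fun w => by positivity, ?_⟩
  rw [Finset.sum_eq_single v (fun b _ hb => by simp [hb]) (fun h => absurd hv h)]
  simp

lemma add_mem_qcone {s : Finset (V n)} {x y : V n} (hx : x ∈ qcone s) (hy : y ∈ qcone s) :
    x + y ∈ qcone s := by
  obtain ⟨c, hc, rfl⟩ := hx
  obtain ⟨d, hd, rfl⟩ := hy
  exact ⟨c + d, fun v => add_nonneg (hc v) (hd v), by
    rw [← Finset.sum_add_distrib]
    exact Finset.sum_congr rfl fun v _ => by simp [add_smul]⟩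

lemma smul_mem_qcone {s : Finset (V n)} {x : V n} {t : ℚ} (ht : 0 ≤ t) (hx : x ∈ qcone s) :
    t • x ∈ qcone s := by
  obtain ⟨c, hc, rfl⟩ := hx
  exact ⟨t • c, fun v => mul_nonneg ht (hc v), by
    rw [Finset.smul_sum]
    exact Finset.sum_congr rfl fun v _ => by simp [smul_smul]⟩

lemma qcone_mono {s t : Finset (V n)} (h : s ⊆ t) : qcone s ⊆ qcone t := by
  classical
  rintro x ⟨c, hc, rfl⟩
  refine ⟨fun v => if v ∈ s then c v else 0, fun v => by dsimp; split <;> [exact hc v; rfl], ?_⟩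
  rw [← Finset.sum_subset h (fun v _ hv => by simp [hv])]
  exact Finset.sum_congr rfl fun v hv => by simp [hv]

lemma map_qcone_sum {s : Finset (V n)} {x : V n} (u : (V n) →ₗ[ℚ] ℚ) {c : V n → ℚ}
    (hx : x = ∑ v ∈ s, c v • v) : u x = ∑ v ∈ s, c v * u v := by
  subst hx; rw [map_sum]; exact Finset.sum_congr rfl fun v _ => by simp

/-- cast of an integer vector -/
def castZ (v : Fin n → ℤ) : V n := fun i => (v i : ℚ)

lemma castZ_inj : Function.Injective (castZ (n := n)) := by
  intro a b h
  funext i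
  have := congrFun h i
  simpa [castZ] using this

lemma intcone_eq (s : Finset (Fin n → ℤ)) :
    {x | ∃ c : (Fin n → ℤ) → ℚ, (∀ v, 0 ≤ c v) ∧
      x = ∑ v ∈ s, c v • (fun i => (v i : ℚ))} = qcone (s.image castZ) := by
  classical
  ext x
  constructor
  · rintro ⟨c, hc, rfl⟩
    refine ⟨Function.extend castZ c 0, ?_, ?_⟩
    · intro v
      rcases em (∃ w, castZ w = v) with ⟨w, rfl⟩ | h
      · rw [castZ_inj.extend_apply]; exact hc w
      · rw [Function.extend_apply' _ _ _ h]; rfl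
    · rw [Finset.sum_image (fun a _ b _ h => castZ_inj h)]
      exact Finset.sum_congr rfl fun v _ => by rw [castZ_inj.extend_apply]; rfl
  · rintro ⟨c, hc, rfl⟩
    refine ⟨fun v => c (castZ v), fun v => hc _, ?_⟩
    rw [Finset.sum_image (fun a _ b _ h => castZ_inj h)]
    rfl

lemma mem_qcone_insert {s : Finset (V n)} {a x : V n} :
    x ∈ qcone (insert a s) ↔ ∃ μ : ℚ, 0 ≤ μ ∧ x - μ • a ∈ qcone s := by
  classical
  constructor
  · rintro ⟨c, hc, rfl⟩
    by_cases ha : a ∈ s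
    · rw [Finset.insert_eq_self.2 ha]
      exact ⟨0, le_rfl, by rw [zero_smul, sub_zero]; exact ⟨c, hc, rfl⟩⟩
    · rw [Finset.sum_insert ha]
      exact ⟨c a, hc a, by rw [add_sub_cancel_left]; exact ⟨c, hc, rfl⟩⟩
  · rintro ⟨μ, hμ, hx⟩
    have h1 : x - μ • a ∈ qcone (insert a s) := qcone_mono (Finset.subset_insert _ _) hx
    have h2 : μ • a ∈ qcone (insert a s) :=
      smul_mem_qcone hμ (mem_qcone_of_mem (Finset.mem_insert_self _ _))
    have := add_mem_qcone h1 h2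
    rwa [sub_add_cancel] at this

set_option maxHeartbeats 1000000 in
/-- Every finitely generated cone has an H-description (Fourier–Motzkin). -/
theorem exists_H (s : Finset (V n)) :
    ∃ U : Finset ((V n) →ₗ[ℚ] ℚ), qcone s = {x | ∀ u ∈ U, 0 ≤ u x} := by
  classical
  induction s using Finset.induction_on with
  | empty =>
    refine ⟨(Finset.univ.image fun i => (LinearMap.proj i : V n →ₗ[ℚ] ℚ)) ∪
      (Finset.univ.image fun i => -(LinearMap.proj i : V n →ₗ[ℚ] ℚ)), ?_⟩
    ext x
    simp only [qcone, Set.mem_setOf_eq, Finset.sum_empty, Finset.mem_union, Finset.mem_image,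
      Finset.mem_univ, true_and]
    constructor
    · rintro ⟨c, hc, rfl⟩ u hu
      rcases hu with ⟨i, rfl⟩ | ⟨i, rfl⟩ <;> simp
    · intro h
      refine ⟨0, fun _ => le_rfl, ?_⟩
      funext i
      have h1 := h _ (Or.inl ⟨i, rfl⟩)
      have h2 := h _ (Or.inr ⟨i, rfl⟩)
      simp only [LinearMap.proj_apply, LinearMap.neg_apply] at h1 h2
      have : x i = 0 := le_antisymm (by linarith) h1
      simpa using this
  | @insert a s ha ih =>
    obtain ⟨U, hU⟩ := ih
    refine ⟨U.filter (fun u => 0 ≤ u a) ∪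
      (((U ×ˢ U).filter fun p => 0 < p.1 a ∧ p.2 a < 0).image
        (fun p => p.1 a • p.2 - p.2 a • p.1)), ?_⟩
    ext x
    simp only [Set.mem_setOf_eq]
    rw [mem_qcone_insert]
    have hmemU : ∀ y, y ∈ qcone s ↔ ∀ u ∈ U, 0 ≤ u y := fun y => by rw [hU]; rfl
    constructor
    · rintro ⟨μ, hμ, hx⟩ u hu
      rw [hmemU] at hx
      have key : ∀ u ∈ U, μ * u a ≤ u x := fun u hu' => by
        have := hx u hu'; rw [map_sub, map_smul, smul_eq_mul] at this; linarith
      rcases Finset.mem_union.1 hu with hu | hu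
      · rcases Finset.mem_filter.1 hu with ⟨huU, hua⟩
        have := key u huU
        nlinarith [mul_nonneg hμ hua]
      · obtain ⟨p, hp, rfl⟩ := Finset.mem_image.1 hu
        obtain ⟨hpU, hp1, hp2⟩ := Finset.mem_filter.1 hp
        have k1 := key p.1 (Finset.mem_product.1 hpU).1
        have k2 := key p.2 (Finset.mem_product.1 hpU).2
        simp only [LinearMap.sub_apply, LinearMap.smul_apply, smul_eq_mul]
        nlinarith
    · intro h
      set T := (U.filter fun u => u a < 0).image (fun u => u x / u a) with hT
      set μ := (insert (0:ℚ) T).max' (Finset.insert_nonempty _ _) with hμdef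
      have hμ0 : 0 ≤ μ := Finset.le_max' _ _ (Finset.mem_insert_self _ _)
      refine ⟨μ, hμ0, ?_⟩
      rw [hmemU]
      intro u huU
      rw [map_sub, map_smul, smul_eq_mul]
      rcases lt_trichotomy (u a) 0 with hua | hua | hua
      · have hmem : u x / u a ∈ insert (0:ℚ) T :=
          Finset.mem_insert_of_mem (Finset.mem_image_of_mem _ (Finset.mem_filter.2 ⟨huU, hua⟩))
        have hle : u x / u a ≤ μ := Finset.le_max' _ _ hmem
        have h2 : μ * u a ≤ (u x / u a) * u a :=
          mul_le_mul_of_nonpos_right hle (le_of_lt hua)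
        rw [div_mul_cancel₀ _ (ne_of_lt hua)] at h2
        linarith
      · have hx0 : 0 ≤ u x :=
          h u (Finset.mem_union_left _ (Finset.mem_filter.2 ⟨huU, le_of_eq hua.symm⟩))
        rw [hua]
        linarith
      · have hmax : μ ∈ insert (0:ℚ) T := Finset.max'_mem _ _
        rcases Finset.mem_insert.1 hmax with h0 | hmemT
        · have hx0 : 0 ≤ u x :=
            h u (Finset.mem_union_left _ (Finset.mem_filter.2 ⟨huU, le_of_lt hua⟩))
          rw [h0]
          linarith
        · obtain ⟨q, hq, hqeq⟩ := Finset.mem_image.1 hmemT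
          obtain ⟨hqU, hqa⟩ := Finset.mem_filter.1 hq
          have hw : 0 ≤ (u a • q - q a • u) x := by
            apply h
            apply Finset.mem_union_right
            exact Finset.mem_image.2 ⟨(u, q),
              Finset.mem_filter.2 ⟨Finset.mem_product.2 ⟨huU, hqU⟩, hua, hqa⟩, rfl⟩
          simp only [LinearMap.sub_apply, LinearMap.smul_apply, smul_eq_mul] at hw
          have hq0 : q a ≠ 0 := ne_of_lt hqa
          have : μ * u a ≤ u x := by
            rw [← hqeq, div_mul_eq_mul_div, div_le_iff_of_neg hqa]
            nlinarith
          linarith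

/-- A face of a finitely generated cone is generated by the generators on which
the supporting functional vanishes. -/
lemma face_qcone_eq (s : Finset (V n)) (u : (V n) →ₗ[ℚ] ℚ)
    (hu : ∀ x ∈ qcone s, 0 ≤ u x) :
    {x ∈ qcone s | u x = 0} = qcone (s.filter fun v => u v = 0) := by
  classical
  ext x
  constructor
  · rintro ⟨⟨c, hc, rfl⟩, hx0⟩
    have hterm : ∀ v ∈ s, 0 ≤ c v * u v := fun v hv =>
      mul_nonneg (hc v) (hu v (mem_qcone_of_mem hv))
    have hsum : ∑ v ∈ s, c v * u v = 0 := by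
      rw [← map_qcone_sum u rfl]; exact hx0
    have hzero := (Finset.sum_eq_zero_iff_of_nonneg hterm).1 hsum
    refine ⟨c, hc, ?_⟩
    refine (Finset.sum_subset (Finset.filter_subset _ _) ?_).symm
    intro v hv hnv
    have huv : u v ≠ 0 := by
      intro h; exact hnv (Finset.mem_filter.2 ⟨hv, h⟩)
    have : c v = 0 := by
      have := hzero v hv
      rcases mul_eq_zero.1 this with h | h
      · exact h
      · exact absurd h huv
    simp [this]
  · rintro ⟨c, hc, rfl⟩
    refine ⟨⟨fun v => if v ∈ s.filter (fun v => u v = 0) then c v else 0,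
      fun v => by dsimp; split <;> [exact hc v; rfl], ?_⟩, ?_⟩
    · rw [← Finset.sum_subset (Finset.filter_subset (fun v => u v = 0) s)
        (fun v _ hv => by dsimp only; rw [if_neg hv, zero_smul])]
      exact (Finset.sum_congr rfl fun v hv => by dsimp only; rw [if_pos hv]).symm
    · rw [map_qcone_sum u rfl]
      exact Finset.sum_eq_zero fun v hv => by
        rw [(Finset.mem_filter.1 hv).2, mul_zero]

/-- Transitivity of faces over a finitely generated cone. -/
lemma isFaceOf_trans {s : Finset (V n)} {τ τ' : Set (V n)}
    (h1 : IsFaceOf τ' τ) (h2 : IsFaceOf τ (qcone s)) : IsFaceOf τ' (qcone s) := by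
  classical
  obtain ⟨u, hu, hτ⟩ := h2
  obtain ⟨u', hu', hτ'⟩ := h1
  set M : Finset ℚ := insert 0 ((s.filter fun v => 0 < u v).image fun v => -u' v / u v)
    with hMdef
  set N : ℚ := M.max' (Finset.insert_nonempty _ _) + 1 with hNdef
  have hN0 : (0:ℚ) ≤ N - 1 := by
    have := Finset.le_max' M (0:ℚ) (Finset.mem_insert_self _ _)
    simp only [hNdef]; linarith
  have hgen : ∀ v ∈ s, 0 ≤ u v := fun v hv => hu v (mem_qcone_of_mem hv)
  have hgen' : ∀ v ∈ s, u v = 0 → 0 ≤ u' v := by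
    intro v hv h0
    have : v ∈ τ := by rw [hτ]; exact ⟨mem_qcone_of_mem hv, h0⟩
    exact hu' v this
  have hpos : ∀ v ∈ s, 0 ≤ N * u v + u' v := by
    intro v hv
    rcases (hgen v hv).lt_or_eq with h | h
    · have hmem : -u' v / u v ∈ M := by
        rw [hMdef]
        exact Finset.mem_insert_of_mem (Finset.mem_image_of_mem _ (Finset.mem_filter.2 ⟨hv, h⟩))
      have hle : -u' v / u v ≤ N - 1 := by
        have := Finset.le_max' M _ hmem; simp only [hNdef]; linarith
      have : -u' v ≤ (N - 1) * u v := by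
        rw [div_le_iff₀ h] at hle; linarith
      nlinarith
    · rw [← h]; simpa using hgen' v hv h.symm
  have hzero : ∀ v ∈ s, N * u v + u' v = 0 → u v = 0 ∧ u' v = 0 := by
    intro v hv h0
    rcases (hgen v hv).lt_or_eq with h | h
    · exfalso
      have hmem : -u' v / u v ∈ M := by
        rw [hMdef]
        exact Finset.mem_insert_of_mem (Finset.mem_image_of_mem _ (Finset.mem_filter.2 ⟨hv, h⟩))
      have hle : -u' v / u v ≤ N - 1 := by
        have := Finset.le_max' M _ hmem; simp only [hNdef]; linarith
      rw [div_le_iff₀ h] at hle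
      nlinarith
    · refine ⟨h.symm, ?_⟩
      rw [← h] at h0; simpa using h0
  refine ⟨N • u + u', ?_, ?_⟩
  · rintro x ⟨c, hc, rfl⟩
    rw [map_qcone_sum _ rfl]
    refine Finset.sum_nonneg fun v hv => mul_nonneg (hc v) ?_
    simpa using hpos v hv
  · rw [hτ', hτ]
    ext x
    simp only [Set.mem_setOf_eq]
    constructor
    · rintro ⟨⟨hxs, hux⟩, hu'x⟩
      exact ⟨hxs, by simp [hux, hu'x]⟩
    · rintro ⟨hxs, hwx⟩
      obtain ⟨c, hc, hxe⟩ := hxs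
      have hterm : ∀ v ∈ s, 0 ≤ c v * (N * u v + u' v) := fun v hv =>
        mul_nonneg (hc v) (hpos v hv)
      have hsum : ∑ v ∈ s, c v * (N * u v + u' v) = 0 := by
        have := map_qcone_sum (N • u + u') hxe
        simp only [LinearMap.add_apply, LinearMap.smul_apply, smul_eq_mul] at this
        rw [← this]; exact hwx
      have hz := (Finset.sum_eq_zero_iff_of_nonneg hterm).1 hsum
      have hcv : ∀ v ∈ s, c v * u v = 0 ∧ c v * u' v = 0 := by
        intro v hv
        rcases mul_eq_zero.1 (hz v hv) with h | h
        · simp [h]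
        · have := hzero v hv h
          simp [this.1, this.2]
      have hux : u x = 0 := by
        rw [map_qcone_sum u hxe]
        exact Finset.sum_eq_zero fun v hv => (hcv v hv).1
      have hu'x : u' x = 0 := by
        rw [map_qcone_sum u' hxe]
        exact Finset.sum_eq_zero fun v hv => (hcv v hv).2
      exact ⟨⟨⟨c, hc, hxe⟩, hux⟩, hu'x⟩

/-- Covering lemma ingredient: walk from `x` in direction `-v` until hitting a face
not containing `v`. -/
lemma covering {s : Finset (V n)} (hsc : ∀ x ∈ qcone s, -x ∈ qcone s → x = 0)
    {v : V n} (hv : v ∈ qcone s) (hv0 : v ≠ 0) {x : V n} (hx : x ∈ qcone s) :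
    ∃ u : (V n) →ₗ[ℚ] ℚ, (∀ y ∈ qcone s, 0 ≤ u y) ∧ 0 < u v ∧
      ∃ c : ℚ, 0 ≤ c ∧ x - c • v ∈ qcone s ∧ u (x - c • v) = 0 := by
  classical
  obtain ⟨U, hU⟩ := exists_H s
  have hmem : ∀ y, y ∈ qcone s ↔ ∀ u ∈ U, 0 ≤ u y := fun y => by rw [hU]; rfl
  have hUv : ∀ u ∈ U, 0 ≤ u v := (hmem v).1 hv
  have hUx : ∀ u ∈ U, 0 ≤ u x := (hmem x).1 hx
  have hne : (U.filter fun u => 0 < u v).Nonempty := by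
    rw [Finset.filter_nonempty_iff]
    by_contra h
    push_neg at h
    have hvz : ∀ u ∈ U, u v = 0 := fun u hu => le_antisymm (h u hu) (hUv u hu)
    have : -v ∈ qcone s := (hmem (-v)).2 fun u hu => by rw [map_neg, hvz u hu]; simp
    exact hv0 (hsc v hv this)
  have hne' : ((U.filter fun u => 0 < u v).image fun u => u x / u v).Nonempty :=
    hne.image _
  set c := ((U.filter fun u => 0 < u v).image fun u => u x / u v).min' hne' with hcdef
  obtain ⟨u₀, hu₀mem, hu₀eq⟩ := Finset.mem_image.1 (Finset.min'_mem _ hne')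
  rw [← hcdef] at hu₀eq
  obtain ⟨hu₀U, hu₀v⟩ := Finset.mem_filter.1 hu₀mem
  have hc0 : 0 ≤ c := by
    rw [← hu₀eq]
    exact div_nonneg (hUx u₀ hu₀U) (le_of_lt hu₀v)
  have hxc : x - c • v ∈ qcone s := by
    rw [hmem]
    intro u hu
    rw [map_sub, map_smul, smul_eq_mul]
    rcases (hUv u hu).lt_or_eq with huv | huv
    · have : c ≤ u x / u v := Finset.min'_le _ _
        (Finset.mem_image_of_mem _ (Finset.mem_filter.2 ⟨hu, huv⟩))
      rw [le_div_iff₀ huv] at this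
      linarith
    · rw [← huv]; simpa using hUx u hu
  refine ⟨u₀, fun y hy => (hmem y).1 hy u₀ hu₀U, hu₀v, c, hc0, hxc, ?_⟩
  rw [map_sub, map_smul, smul_eq_mul, ← hu₀eq, div_mul_cancel₀ _ (ne_of_gt hu₀v)]
  simp

/-! ### Ray / Minkowski sum helpers -/

/-- Minkowski sum of a ray and a cone (matches the set in the theorem statement). -/
def plus (ρ A : Set (V n)) : Set (V n) := {x | ∃ a ∈ ρ, ∃ b ∈ A, x = a + b}

variable {v : V n} {ρ : Set (V n)}

lemma mem_plus (hρeq : ρ = {x | ∃ c : ℚ, 0 ≤ c ∧ x = c • v}) {A : Set (V n)} {x : V n} :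
    x ∈ plus ρ A ↔ ∃ c : ℚ, 0 ≤ c ∧ ∃ b ∈ A, x = c • v + b := by
  constructor
  · rintro ⟨a, ha, b, hb, rfl⟩
    rw [hρeq] at ha
    obtain ⟨c, hc, rfl⟩ := ha
    exact ⟨c, hc, b, hb, rfl⟩
  · rintro ⟨c, hc, b, hb, rfl⟩
    exact ⟨c • v, by rw [hρeq]; exact ⟨c, hc, rfl⟩, b, hb, rfl⟩

lemma subset_plus (h0 : (0:V n) ∈ ρ) {A : Set (V n)} : A ⊆ plus ρ A :=
  fun b hb => ⟨0, h0, b, hb, (zero_add b).symm⟩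

lemma plus_qcone (hρeq : ρ = {x | ∃ c : ℚ, 0 ≤ c ∧ x = c • v}) {A : Set (V n)}
    {t : Finset (V n)} (hA : A = qcone t) : plus ρ A = qcone (insert v t) := by
  ext x
  rw [mem_plus hρeq, mem_qcone_insert]
  constructor
  · rintro ⟨c, hc, b, hb, rfl⟩
    refine ⟨c, hc, ?_⟩
    rw [add_sub_cancel_left, ← hA]
    exact hb
  · rintro ⟨μ, hμ, hx⟩
    exact ⟨μ, hμ, x - μ • v, by rw [hA]; exact hx, by abel⟩

/-- Face construction lemma: if `δ` and `e` are faces of `π'` cut out by `g` and `k`,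
with `e ⊆ δ` and `g v > 0`, then `ρ + e` is a face of `ρ + δ`. -/
lemma faceF (hρeq : ρ = {x | ∃ c : ℚ, 0 ≤ c ∧ x = c • v}) {π' : Set (V n)}
    {g k : (V n) →ₗ[ℚ] ℚ} (hg : ∀ x ∈ π', 0 ≤ g x) (hk : ∀ x ∈ π', 0 ≤ k x)
    (hgv : 0 < g v) (hsub : ∀ y ∈ π', k y = 0 → g y = 0) :
    IsFaceOf (plus ρ {y | y ∈ π' ∧ k y = 0}) (plus ρ {y | y ∈ π' ∧ g y = 0}) := by
  set w : (V n) →ₗ[ℚ] ℚ := k - (k v / g v) • g with hwdef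
  have hwv : w v = 0 := by
    simp only [hwdef, LinearMap.sub_apply, LinearMap.smul_apply, smul_eq_mul]
    field_simp
    simp
  have hwb : ∀ b ∈ π', g b = 0 → w b = k b := by
    intro b hb hgb
    simp only [hwdef, LinearMap.sub_apply, LinearMap.smul_apply, smul_eq_mul, hgb, mul_zero,
      sub_zero]
  have hwx : ∀ (c : ℚ) (b : V n), b ∈ π' → g b = 0 → w (c • v + b) = k b := by
    intro c b hb hgb
    rw [map_add, map_smul, smul_eq_mul, hwv, mul_zero, zero_add, hwb b hb hgb]
  refine ⟨w, ?_, ?_⟩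
  · intro x hx
    rw [mem_plus hρeq] at hx
    obtain ⟨c, hc, b, ⟨hbπ, hgb⟩, rfl⟩ := hx
    rw [hwx c b hbπ hgb]
    exact hk b hbπ
  · ext x
    simp only [Set.mem_setOf_eq]
    constructor
    · intro hx
      rw [mem_plus hρeq] at hx
      obtain ⟨c, hc, b, ⟨hbπ, hkb⟩, rfl⟩ := hx
      have hgb : g b = 0 := hsub b hbπ hkb
      refine ⟨?_, ?_⟩
      · rw [mem_plus hρeq]
        exact ⟨c, hc, b, ⟨hbπ, hgb⟩, rfl⟩
      · rw [hwx c b hbπ hgb]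
        exact hkb
    · rintro ⟨hx, hwx0⟩
      rw [mem_plus hρeq] at hx
      obtain ⟨c, hc, b, ⟨hbπ, hgb⟩, rfl⟩ := hx
      rw [mem_plus hρeq]
      have hkb : k b = 0 := by
        rw [hwx c b hbπ hgb] at hwx0
        exact hwx0
      exact ⟨c, hc, b, ⟨hbπ, hkb⟩, rfl⟩

end Stellar

open Stellar in
/-- Stellar subdivision: if `ρ` is a ray in the support of a fan `S` but not a
cone of `S`, then replacing every cone `τ ⊇ ρ` by the cones `ρ + δ`, for `δ` a
face of `τ` not containing `ρ` (and keeping all cones not containing `ρ`),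
yields a fan with the same support, each of whose cones is contained in a cone
of `S`. -/
theorem stellar_subdivision_is_fan {n : ℕ}
    (S : Set (Set (Fin n → ℚ))) (hS : IsFan S)
    (ρ : Set (Fin n → ℚ)) (hρ : IsRay ρ) (hsupp : ρ ⊆ ⋃₀ S) (hnew : ρ ∉ S)
    (S' : Set (Set (Fin n → ℚ)))
    (hS' : S' = {σ | σ ∈ S ∧ ¬ ρ ⊆ σ} ∪
      {c | ∃ τ ∈ S, ρ ⊆ τ ∧ ∃ δ : Set (Fin n → ℚ), IsFaceOf δ τ ∧ ¬ ρ ⊆ δ ∧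
        c = {x | ∃ a ∈ ρ, ∃ b ∈ δ, x = a + b}}) :
    IsFan S' ∧ ⋃₀ S' = ⋃₀ S ∧ ∀ σ' ∈ S', ∃ σ ∈ S, σ' ⊆ σ := by
  classical
  obtain ⟨hSfin, hSpoly, hSface, hSint⟩ := hS
  obtain ⟨vz, hvz0, hρeq⟩ := hρ
  have hρeq' : ρ = {x | ∃ c : ℚ, 0 ≤ c ∧ x = c • castZ vz} := hρeq
  have hv0' : castZ vz ≠ 0 := hvz0
  have hvρ : castZ vz ∈ ρ := by rw [hρeq']; exact ⟨1, by norm_num, (one_smul _ _).symm⟩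
  have h0ρ : (0 : Fin n → ℚ) ∈ ρ := by rw [hρeq']; exact ⟨0, le_rfl, (zero_smul _ _).symm⟩
  have hS'2 : S' = {σ | σ ∈ S ∧ ¬ ρ ⊆ σ} ∪
      {c | ∃ τ ∈ S, ρ ⊆ τ ∧ ∃ δ : Set (Fin n → ℚ), IsFaceOf δ τ ∧ ¬ ρ ⊆ δ ∧
        c = plus ρ δ} := hS'
  clear hS'
  -- basic facts about members of S
  have hrepZ : ∀ σ ∈ S, ∃ sz : Finset (Fin n → ℤ), σ = qcone (sz.image castZ) := by
    intro σ hσ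
    obtain ⟨⟨sz, h⟩, -⟩ := hSpoly σ hσ
    exact ⟨sz, by rw [h, intcone_eq]⟩
  have hrep : ∀ σ ∈ S, ∃ s : Finset (Fin n → ℚ), σ = qcone s := by
    intro σ hσ
    obtain ⟨sz, h⟩ := hrepZ σ hσ
    exact ⟨sz.image castZ, h⟩
  have hadd : ∀ σ ∈ S, ∀ x y : Fin n → ℚ, x ∈ σ → y ∈ σ → x + y ∈ σ := by
    intro σ hσ x y hx hy
    obtain ⟨s, hs⟩ := hrep σ hσ
    rw [hs] at hx hy ⊢
    exact add_mem_qcone hx hy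
  have hsmul : ∀ σ ∈ S, ∀ c : ℚ, 0 ≤ c → ∀ x : Fin n → ℚ, x ∈ σ → c • x ∈ σ := by
    intro σ hσ c hc x hx
    obtain ⟨s, hs⟩ := hrep σ hσ
    rw [hs] at hx ⊢
    exact smul_mem_qcone hc hx
  have hzero : ∀ σ ∈ S, (0 : Fin n → ℚ) ∈ σ := by
    intro σ hσ
    obtain ⟨s, hs⟩ := hrep σ hσ
    rw [hs]
    exact zero_mem_qcone s
  have hρ_iff : ∀ σ ∈ S, (ρ ⊆ σ ↔ castZ vz ∈ σ) := by
    intro σ hσ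
    refine ⟨fun h => h hvρ, fun h x hx => ?_⟩
    rw [hρeq'] at hx
    obtain ⟨c, hc, rfl⟩ := hx
    exact hsmul σ hσ c hc _ h
  have hface_sub : ∀ {δ τ : Set (Fin n → ℚ)}, IsFaceOf δ τ → δ ⊆ τ := by
    rintro δ τ ⟨u, hu, rfl⟩ x hx
    exact hx.1
  have htrans : ∀ σ ∈ S, ∀ {τ τ' : Set (Fin n → ℚ)},
      IsFaceOf τ' τ → IsFaceOf τ σ → IsFaceOf τ' σ := by
    intro σ hσ τ τ' h1 h2
    obtain ⟨s, hs⟩ := hrep σ hσ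
    rw [hs] at h2 ⊢
    exact isFaceOf_trans h1 h2
  have hplus_sub : ∀ τ ∈ S, ρ ⊆ τ → ∀ {δ : Set (Fin n → ℚ)}, δ ⊆ τ → plus ρ δ ⊆ τ := by
    intro τ hτ hρτ δ hδτ x hx
    obtain ⟨a, ha, b, hb, rfl⟩ := hx
    exact hadd τ hτ _ _ (hρτ ha) (hδτ hb)
  -- third claim
  have third : ∀ σ' ∈ S', ∃ σ ∈ S, σ' ⊆ σ := by
    rw [hS'2]
    rintro σ' (⟨hσS, -⟩ | ⟨τ, hτS, hρτ, δ, hδf, hρδ, rfl⟩)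
    · exact ⟨σ', hσS, subset_rfl⟩
    · exact ⟨τ, hτS, hplus_sub τ hτS hρτ (hface_sub hδf)⟩
  -- finiteness
  have hfin : S'.Finite := by
    rw [hS'2]
    refine Set.Finite.union (hSfin.subset fun σ h => h.1) ?_
    refine (hSfin.image (fun δ => plus ρ δ)).subset ?_
    rintro c ⟨τ, hτS, hρτ, δ, hδf, hρδ, rfl⟩
    exact ⟨δ, hSface τ hτS δ hδf, rfl⟩
  -- polyhedrality
  have hpoly : ∀ σ' ∈ S', IsRatPolyCone σ' := by
    rw [hS'2]
    rintro σ' (⟨hσS, -⟩ | ⟨τ, hτS, hρτ, δ, hδf, hρδ, rfl⟩)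
    · exact hSpoly σ' hσS
    · obtain ⟨sz, hsz⟩ := hrepZ τ hτS
      obtain ⟨g, hg, hδeq⟩ := hδf
      have hg' : ∀ x ∈ qcone (sz.image castZ), 0 ≤ g x := by rw [← hsz]; exact hg
      have hfilter : (sz.image castZ).filter (fun y => g y = 0)
          = (sz.filter fun w => g (castZ w) = 0).image castZ := by
        ext y
        simp only [Finset.mem_filter, Finset.mem_image]
        constructor
        · rintro ⟨⟨a, ha, rfl⟩, hy⟩
          exact ⟨a, ⟨ha, hy⟩, rfl⟩
        · rintro ⟨a, ⟨ha, hy⟩, rfl⟩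
          exact ⟨⟨a, ha, rfl⟩, hy⟩
      have hδq : δ = qcone ((sz.filter fun w => g (castZ w) = 0).image castZ) := by
        rw [hδeq, hsz, face_qcone_eq _ g hg', hfilter]
      constructor
      · refine ⟨insert vz (sz.filter fun w => g (castZ w) = 0), ?_⟩
        rw [intcone_eq, Finset.image_insert]
        exact plus_qcone hρeq' hδq
      · intro x hx hnx
        have hsub' : plus ρ δ ⊆ τ := hplus_sub τ hτS hρτ (hface_sub ⟨g, hg, hδeq⟩)
        exact (hSpoly τ hτS).2 x (hsub' hx) (hsub' hnx)
  -- face closure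
  have hfaceclosure : ∀ σ' ∈ S', ∀ F : Set (Fin n → ℚ), IsFaceOf F σ' → F ∈ S' := by
    rw [hS'2]
    rintro σ' (⟨hσS, hρσ⟩ | ⟨τ, hτS, hρτ, δ, hδf, hρδ, rfl⟩) F hF
    · exact Or.inl ⟨hSface σ' hσS F hF,
        fun hcon => hρσ (fun x hx => hface_sub hF (hcon hx))⟩
    · obtain ⟨w, hw, hFeq⟩ := hF
      obtain ⟨g, hg, hδeq⟩ := hδf
      have hδτ : δ ⊆ τ := hface_sub ⟨g, hg, hδeq⟩
      have hδS : δ ∈ S := hSface τ hτS δ ⟨g, hg, hδeq⟩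
      have h0δ : (0 : Fin n → ℚ) ∈ δ := by
        rw [hδeq]; exact ⟨hzero τ hτS, map_zero g⟩
      have hvplus : castZ vz ∈ plus ρ δ := ⟨castZ vz, hvρ, 0, h0δ, (add_zero _).symm⟩
      have hvδ : castZ vz ∉ δ := fun h => hρδ ((hρ_iff δ hδS).2 h)
      have hwexp : ∀ (c : ℚ) (b : Fin n → ℚ),
          w (c • castZ vz + b) = c * w (castZ vz) + w b := by
        intro c b; rw [map_add, map_smul, smul_eq_mul]
      rcases (hw _ hvplus).lt_or_eq with hwv | hwv
      · -- `w v > 0` : F is a face of δ, hence an old cone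
        have hFδ : F = {y ∈ δ | w y = 0} := by
          rw [hFeq]
          ext x
          constructor
          · rintro ⟨hxp, hwx⟩
            rw [mem_plus hρeq'] at hxp
            obtain ⟨c, hc, b, hb, rfl⟩ := hxp
            have hbw : 0 ≤ w b := hw b (subset_plus h0ρ hb)
            rw [hwexp c b] at hwx
            have hc0 : c = 0 := by nlinarith
            have hxb : c • castZ vz + b = b := by rw [hc0, zero_smul, zero_add]
            rw [hxb]
            refine ⟨hb, ?_⟩
            rw [hc0] at hwx
            linarith
          · rintro ⟨hbδ, hwb⟩
            exact ⟨subset_plus h0ρ hbδ, hwb⟩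
        left
        have hFfaceδ : IsFaceOf F δ := ⟨w, fun y hy => hw y (subset_plus h0ρ hy), hFδ⟩
        have hFfaceτ : IsFaceOf F τ := htrans τ hτS hFfaceδ ⟨g, hg, hδeq⟩
        refine ⟨hSface τ hτS F hFfaceτ, fun hcon => ?_⟩
        have hvF : castZ vz ∈ F := hcon hvρ
        rw [hFδ] at hvF
        exact absurd hvF.2 (ne_of_gt hwv)
      · -- `w v = 0` : F = ρ + δ' for the face δ' of δ
        right
        have hδ'δ : IsFaceOf {y ∈ δ | w y = 0} δ :=
          ⟨w, fun y hy => hw y (subset_plus h0ρ hy), rfl⟩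
        have hδ'τ : IsFaceOf {y ∈ δ | w y = 0} τ := htrans τ hτS hδ'δ ⟨g, hg, hδeq⟩
        refine ⟨τ, hτS, hρτ, {y ∈ δ | w y = 0}, hδ'τ, fun hcon => hvδ (hcon hvρ).1, ?_⟩
        rw [hFeq]
        ext x
        constructor
        · rintro ⟨hxp, hwx⟩
          rw [mem_plus hρeq'] at hxp
          obtain ⟨c, hc, b, hb, rfl⟩ := hxp
          rw [hwexp c b, ← hwv, mul_zero, zero_add] at hwx
          exact ⟨c • castZ vz, by rw [hρeq']; exact ⟨c, hc, rfl⟩, b, ⟨hb, hwx⟩, rfl⟩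
        · rintro ⟨a, ha, b, hb, rfl⟩
          rw [hρeq'] at ha
          obtain ⟨c, hc, rfl⟩ := ha
          refine ⟨?_, ?_⟩
          · rw [mem_plus hρeq']
            exact ⟨c, hc, b, hb.1, rfl⟩
          · rw [hwexp c b, ← hwv, mul_zero, zero_add]
            exact hb.2
  -- support
  have hsupport : ⋃₀ S' = ⋃₀ S := by
    apply Set.Subset.antisymm
    · rintro x ⟨σ', hσ', hx⟩
      obtain ⟨σ, hσS, hsub⟩ := third σ' hσ'
      exact ⟨σ, hσS, hsub hx⟩
    · rintro x ⟨σ, hσS, hx⟩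
      by_cases hρσ : ρ ⊆ σ
      · obtain ⟨s, hs⟩ := hrep σ hσS
        have hsc : ∀ y ∈ qcone s, -y ∈ qcone s → y = 0 := by
          rw [← hs]; exact (hSpoly σ hσS).2
        have hvq : castZ vz ∈ qcone s := by rw [← hs]; exact hρσ hvρ
        have hxq : x ∈ qcone s := by rw [← hs]; exact hx
        obtain ⟨u, hu, huv, c, hc, hb, hub⟩ := covering hsc hvq hv0' hxq
        refine ⟨plus ρ {y ∈ σ | u y = 0}, ?_, ?_⟩
        · rw [hS'2]
          right
          refine ⟨σ, hσS, hρσ, {y ∈ σ | u y = 0},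
            ⟨u, by rw [hs]; exact hu, rfl⟩, fun hcon => ?_, rfl⟩
          exact absurd (hcon hvρ).2 (ne_of_gt huv)
        · rw [mem_plus hρeq']
          exact ⟨c, hc, x - c • castZ vz, ⟨by rw [hs]; exact hb, hub⟩, by abel⟩
      · exact ⟨σ, by rw [hS'2]; exact Or.inl ⟨hσS, hρσ⟩, hx⟩
  -- mixed intersection helper
  have mixed : ∀ σ ∈ S, ¬ρ ⊆ σ → ∀ τ ∈ S, ρ ⊆ τ →
      ∀ δ : Set (Fin n → ℚ), IsFaceOf δ τ → ¬ρ ⊆ δ →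
      IsFaceOf (σ ∩ plus ρ δ) σ ∧ IsFaceOf (σ ∩ plus ρ δ) (plus ρ δ) := by
    intro σ hσS hρσ τ hτS hρτ δ hδf hρδ
    obtain ⟨u, hu, hueq⟩ := (hSint σ hσS τ hτS).2
    have hδτ : δ ⊆ τ := hface_sub hδf
    have hδS : δ ∈ S := hSface τ hτS δ hδf
    have hvτ : castZ vz ∈ τ := hρτ hvρ
    have hvσ : castZ vz ∉ σ := fun h => hρσ ((hρ_iff σ hσS).2 h)
    have huv : 0 < u (castZ vz) := by
      rcases (hu _ hvτ).lt_or_eq with h | h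
      · exact h
      · exfalso
        apply hvσ
        have hmem : castZ vz ∈ σ ∩ τ := by rw [hueq]; exact ⟨hvτ, h.symm⟩
        exact hmem.1
    have hplusτ : plus ρ δ ⊆ τ := hplus_sub τ hτS hρτ hδτ
    have huexp : ∀ (c : ℚ) (b : Fin n → ℚ),
        u (c • castZ vz + b) = c * u (castZ vz) + u b := by
      intro c b; rw [map_add, map_smul, smul_eq_mul]
    have key1 : σ ∩ plus ρ δ = σ ∩ δ := by
      ext x
      constructor
      · rintro ⟨hxσ, hxp⟩
        rw [mem_plus hρeq'] at hxp
        obtain ⟨c, hc, b, hb, rfl⟩ := hxp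
        have hxτ : c • castZ vz + b ∈ τ :=
          hadd τ hτS _ _ (hsmul τ hτS c hc _ hvτ) (hδτ hb)
        have hux : u (c • castZ vz + b) = 0 := by
          have hmem : (c • castZ vz + b) ∈ σ ∩ τ := ⟨hxσ, hxτ⟩
          rw [hueq] at hmem
          exact hmem.2
        have hub : 0 ≤ u b := hu b (hδτ hb)
        rw [huexp c b] at hux
        have hc0 : c = 0 := by nlinarith
        have hxb : c • castZ vz + b = b := by rw [hc0, zero_smul, zero_add]
        rw [hxb] at hxσ ⊢
        exact ⟨hxσ, hb⟩
      · rintro ⟨hxσ, hxδ⟩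
        exact ⟨hxσ, subset_plus h0ρ hxδ⟩
    have key2 : {x ∈ plus ρ δ | u x = 0} = σ ∩ δ := by
      ext x
      constructor
      · rintro ⟨hxp, hux⟩
        rw [mem_plus hρeq'] at hxp
        obtain ⟨c, hc, b, hb, rfl⟩ := hxp
        have hub : 0 ≤ u b := hu b (hδτ hb)
        rw [huexp c b] at hux
        have hc0 : c = 0 := by nlinarith
        have hxb : c • castZ vz + b = b := by rw [hc0, zero_smul, zero_add]
        rw [hxb]
        have hub0 : u b = 0 := by rw [hc0] at hux; linarith
        have hbστ : b ∈ σ ∩ τ := by rw [hueq]; exact ⟨hδτ hb, hub0⟩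
        exact ⟨hbστ.1, hb⟩
      · rintro ⟨hxσ, hxδ⟩
        have hmem : x ∈ σ ∩ τ := ⟨hxσ, hδτ hxδ⟩
        rw [hueq] at hmem
        exact ⟨subset_plus h0ρ hxδ, hmem.2⟩
    constructor
    · rw [key1]
      exact (hSint σ hσS δ hδS).1
    · exact ⟨u, fun y hy => hu y (hplusτ hy), by rw [key1, ← key2]⟩
  -- new-new intersection helper
  have newnew : ∀ τ₁ ∈ S, ρ ⊆ τ₁ → ∀ δ₁ : Set (Fin n → ℚ), IsFaceOf δ₁ τ₁ → ¬ρ ⊆ δ₁ →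
      ∀ τ₂ ∈ S, ρ ⊆ τ₂ → ∀ δ₂ : Set (Fin n → ℚ), IsFaceOf δ₂ τ₂ → ¬ρ ⊆ δ₂ →
      IsFaceOf (plus ρ δ₁ ∩ plus ρ δ₂) (plus ρ δ₁) := by
    intro τ₁ hτ₁S hρτ₁ δ₁ hδ₁f hρδ₁ τ₂ hτ₂S hρτ₂ δ₂ hδ₂f hρδ₂
    have hδ₁S : δ₁ ∈ S := hSface τ₁ hτ₁S δ₁ hδ₁f
    have hδ₂S : δ₂ ∈ S := hSface τ₂ hτ₂S δ₂ hδ₂f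
    have hδ₁τ₁ : δ₁ ⊆ τ₁ := hface_sub hδ₁f
    have hδ₂τ₂ : δ₂ ⊆ τ₂ := hface_sub hδ₂f
    have cf₁ : IsFaceOf (τ₁ ∩ τ₂) τ₁ := (hSint τ₁ hτ₁S τ₂ hτ₂S).1
    have cf₂ : IsFaceOf (τ₁ ∩ τ₂) τ₂ := (hSint τ₁ hτ₁S τ₂ hτ₂S).2
    have hπS : (τ₁ ∩ τ₂) ∈ S := hSface τ₁ hτ₁S _ cf₁
    obtain ⟨u₁, hu₁, hu₁eq⟩ := cf₁
    obtain ⟨u₂, hu₂, hu₂eq⟩ := cf₂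
    have hρπ : ρ ⊆ τ₁ ∩ τ₂ := fun x hx => ⟨hρτ₁ hx, hρτ₂ hx⟩
    have hvπ : castZ vz ∈ τ₁ ∩ τ₂ := hρπ hvρ
    have hvδ₁ : castZ vz ∉ δ₁ := fun h => hρδ₁ ((hρ_iff δ₁ hδ₁S).2 h)
    have hvδ₂ : castZ vz ∉ δ₂ := fun h => hρδ₂ ((hρ_iff δ₂ hδ₂S).2 h)
    have hcfδ₁ : IsFaceOf (δ₁ ∩ (τ₁ ∩ τ₂)) δ₁ := (hSint δ₁ hδ₁S _ hπS).1
    have hcfδ₁' : IsFaceOf (δ₁ ∩ (τ₁ ∩ τ₂)) (τ₁ ∩ τ₂) := (hSint δ₁ hδ₁S _ hπS).2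
    have hcfδ₂ : IsFaceOf (δ₂ ∩ (τ₁ ∩ τ₂)) δ₂ := (hSint δ₂ hδ₂S _ hπS).1
    have hcfδ₂' : IsFaceOf (δ₂ ∩ (τ₁ ∩ τ₂)) (τ₁ ∩ τ₂) := (hSint δ₂ hδ₂S _ hπS).2
    have hδ₁'S : (δ₁ ∩ (τ₁ ∩ τ₂)) ∈ S := hSface δ₁ hδ₁S _ hcfδ₁
    have hδ₂'S : (δ₂ ∩ (τ₁ ∩ τ₂)) ∈ S := hSface δ₂ hδ₂S _ hcfδ₂
    obtain ⟨w₁, hw₁, hw₁eq⟩ := hcfδ₁'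
    obtain ⟨w₂, hw₂, hw₂eq⟩ := hcfδ₂'
    have hw₁v : 0 < w₁ (castZ vz) := by
      rcases (hw₁ _ hvπ).lt_or_eq with h | h
      · exact h
      · exfalso
        apply hvδ₁
        have hmem : castZ vz ∈ δ₁ ∩ (τ₁ ∩ τ₂) := by rw [hw₁eq]; exact ⟨hvπ, h.symm⟩
        exact hmem.1
    have hw₂v : 0 < w₂ (castZ vz) := by
      rcases (hw₂ _ hvπ).lt_or_eq with h | h
      · exact h
      · exfalso
        apply hvδ₂
        have hmem : castZ vz ∈ δ₂ ∩ (τ₁ ∩ τ₂) := by rw [hw₂eq]; exact ⟨hvπ, h.symm⟩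
        exact hmem.1
    -- the intersection is ρ + (δ₁' ∩ δ₂')
    have E : plus ρ δ₁ ∩ plus ρ δ₂ = plus ρ ((δ₁ ∩ (τ₁ ∩ τ₂)) ∩ (δ₂ ∩ (τ₁ ∩ τ₂))) := by
      ext x
      constructor
      · rintro ⟨hx₁, hx₂⟩
        rw [mem_plus hρeq'] at hx₁ hx₂
        obtain ⟨c₁, hc₁, b₁, hb₁, hx₁e⟩ := hx₁
        obtain ⟨c₂, hc₂, b₂, hb₂, hx₂e⟩ := hx₂
        have hxτ₁ : x ∈ τ₁ := by
          rw [hx₁e]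
          exact hadd τ₁ hτ₁S _ _ (hsmul τ₁ hτ₁S c₁ hc₁ _ hvπ.1) (hδ₁τ₁ hb₁)
        have hxτ₂ : x ∈ τ₂ := by
          rw [hx₂e]
          exact hadd τ₂ hτ₂S _ _ (hsmul τ₂ hτ₂S c₂ hc₂ _ hvπ.2) (hδ₂τ₂ hb₂)
        have hxπ : x ∈ τ₁ ∩ τ₂ := ⟨hxτ₁, hxτ₂⟩
        -- b₁ ∈ π
        have hu₁x : u₁ x = 0 := by
          have := hxπ; rw [hu₁eq] at this; exact this.2
        have hu₁b₁ : u₁ b₁ = 0 := by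
          have hexp : u₁ x = c₁ * u₁ (castZ vz) + u₁ b₁ := by
            rw [hx₁e, map_add, map_smul, smul_eq_mul]
          have h1 : 0 ≤ u₁ (castZ vz) := hu₁ _ hvπ.1
          have h2 : 0 ≤ u₁ b₁ := hu₁ _ (hδ₁τ₁ hb₁)
          nlinarith
        have hb₁π : b₁ ∈ τ₁ ∩ τ₂ := by rw [hu₁eq]; exact ⟨hδ₁τ₁ hb₁, hu₁b₁⟩
        have hu₂x : u₂ x = 0 := by
          have := hxπ; rw [hu₂eq] at this; exact this.2
        have hu₂b₂ : u₂ b₂ = 0 := by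
          have hexp : u₂ x = c₂ * u₂ (castZ vz) + u₂ b₂ := by
            rw [hx₂e, map_add, map_smul, smul_eq_mul]
          have h1 : 0 ≤ u₂ (castZ vz) := hu₂ _ hvπ.2
          have h2 : 0 ≤ u₂ b₂ := hu₂ _ (hδ₂τ₂ hb₂)
          nlinarith
        have hb₂π : b₂ ∈ τ₁ ∩ τ₂ := by rw [hu₂eq]; exact ⟨hδ₂τ₂ hb₂, hu₂b₂⟩
        have hb₁δ₁' : b₁ ∈ δ₁ ∩ (τ₁ ∩ τ₂) := ⟨hb₁, hb₁π⟩
        have hb₂δ₂' : b₂ ∈ δ₂ ∩ (τ₁ ∩ τ₂) := ⟨hb₂, hb₂π⟩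
        have hw₁b₁ : w₁ b₁ = 0 := by
          have := hb₁δ₁'; rw [hw₁eq] at this; exact this.2
        have hw₂b₂ : w₂ b₂ = 0 := by
          have := hb₂δ₂'; rw [hw₂eq] at this; exact this.2
        have hw₁b₂ : 0 ≤ w₁ b₂ := hw₁ _ hb₂π
        have hw₂b₁ : 0 ≤ w₂ b₁ := hw₂ _ hb₁π
        have hw₁x : c₁ * w₁ (castZ vz) = c₂ * w₁ (castZ vz) + w₁ b₂ := by
          have e1 : w₁ x = c₁ * w₁ (castZ vz) + w₁ b₁ := by
            rw [hx₁e, map_add, map_smul, smul_eq_mul]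
          have e2 : w₁ x = c₂ * w₁ (castZ vz) + w₁ b₂ := by
            rw [hx₂e, map_add, map_smul, smul_eq_mul]
          rw [hw₁b₁] at e1
          linarith
        have hw₂x : c₂ * w₂ (castZ vz) = c₁ * w₂ (castZ vz) + w₂ b₁ := by
          have e1 : w₂ x = c₁ * w₂ (castZ vz) + w₂ b₁ := by
            rw [hx₁e, map_add, map_smul, smul_eq_mul]
          have e2 : w₂ x = c₂ * w₂ (castZ vz) + w₂ b₂ := by
            rw [hx₂e, map_add, map_smul, smul_eq_mul]
          rw [hw₂b₂] at e2
          linarith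
        have hc : c₁ = c₂ := by nlinarith
        have hbb : b₁ = b₂ := by
          have : c₁ • castZ vz + b₁ = c₂ • castZ vz + b₂ := by rw [← hx₁e, ← hx₂e]
          rw [hc] at this
          exact add_left_cancel this
        rw [mem_plus hρeq']
        exact ⟨c₁, hc₁, b₁, ⟨hb₁δ₁', hbb ▸ hb₂δ₂'⟩, hx₁e⟩
      · intro hx
        rw [mem_plus hρeq'] at hx
        obtain ⟨c, hc, b, ⟨hbδ₁', hbδ₂'⟩, rfl⟩ := hx
        constructor
        · rw [mem_plus hρeq']
          exact ⟨c, hc, b, hbδ₁'.1, rfl⟩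
        · rw [mem_plus hρeq']
          exact ⟨c, hc, b, hbδ₂'.1, rfl⟩
    -- face chain : plus (δ₁' ∩ δ₂') face of plus δ₁' face of plus δ₁
    obtain ⟨g₁, hg₁, hg₁eq⟩ := hδ₁f
    have hg₁v : 0 < g₁ (castZ vz) := by
      rcases (hg₁ _ hvπ.1).lt_or_eq with h | h
      · exact h
      · exfalso
        apply hvδ₁
        rw [hg₁eq]
        exact ⟨hvπ.1, h.symm⟩
    have hδ₁'τ₁ : IsFaceOf (δ₁ ∩ (τ₁ ∩ τ₂)) τ₁ := htrans τ₁ hτ₁S hcfδ₁ ⟨g₁, hg₁, hg₁eq⟩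
    obtain ⟨k₁, hk₁, hk₁eq⟩ := hδ₁'τ₁
    have step1 : IsFaceOf (plus ρ (δ₁ ∩ (τ₁ ∩ τ₂))) (plus ρ δ₁) := by
      have hh := faceF hρeq' hg₁ hk₁ hg₁v (fun y hy hky => by
        have hyδ₁' : y ∈ δ₁ ∩ (τ₁ ∩ τ₂) := by rw [hk₁eq]; exact ⟨hy, hky⟩
        have hyδ₁ : y ∈ δ₁ := hyδ₁'.1
        rw [hg₁eq] at hyδ₁
        exact hyδ₁.2)
      rw [← hk₁eq, ← hg₁eq] at hh
      exact hh
    have he_cf : IsFaceOf ((δ₁ ∩ (τ₁ ∩ τ₂)) ∩ (δ₂ ∩ (τ₁ ∩ τ₂))) (δ₁ ∩ (τ₁ ∩ τ₂)) :=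
      (hSint _ hδ₁'S _ hδ₂'S).1
    have he_π : IsFaceOf ((δ₁ ∩ (τ₁ ∩ τ₂)) ∩ (δ₂ ∩ (τ₁ ∩ τ₂))) (τ₁ ∩ τ₂) :=
      htrans _ hπS he_cf ⟨w₁, hw₁, hw₁eq⟩
    obtain ⟨k', hk', hk'eq⟩ := he_π
    have step2 : IsFaceOf (plus ρ ((δ₁ ∩ (τ₁ ∩ τ₂)) ∩ (δ₂ ∩ (τ₁ ∩ τ₂))))
        (plus ρ (δ₁ ∩ (τ₁ ∩ τ₂))) := by
      have hh := faceF hρeq' hw₁ hk' hw₁v (fun y hy hky => by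
        have hye : y ∈ (δ₁ ∩ (τ₁ ∩ τ₂)) ∩ (δ₂ ∩ (τ₁ ∩ τ₂)) := by
          rw [hk'eq]; exact ⟨hy, hky⟩
        have hyδ₁' : y ∈ δ₁ ∩ (τ₁ ∩ τ₂) := hye.1
        rw [hw₁eq] at hyδ₁'
        exact hyδ₁'.2)
      rw [← hk'eq, ← hw₁eq] at hh
      exact hh
    -- plus ρ δ₁ is a qcone
    obtain ⟨s₁, hs₁⟩ := hrep τ₁ hτ₁S
    have hg₁' : ∀ x ∈ qcone s₁, 0 ≤ g₁ x := by rw [← hs₁]; exact hg₁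
    have hδ₁q : δ₁ = qcone (s₁.filter fun y => g₁ y = 0) := by
      rw [hg₁eq, hs₁]
      exact face_qcone_eq s₁ g₁ hg₁'
    have hplusq : plus ρ δ₁ = qcone (insert (castZ vz) (s₁.filter fun y => g₁ y = 0)) :=
      plus_qcone hρeq' hδ₁q
    rw [E]
    rw [hplusq] at step1 ⊢
    exact isFaceOf_trans step2 step1
  -- intersections
  have hinter : ∀ σ' ∈ S', ∀ τ' ∈ S',
      IsFaceOf (σ' ∩ τ') σ' ∧ IsFaceOf (σ' ∩ τ') τ' := by
    rw [hS'2]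
    rintro σ' hσ' τ' hτ'
    rcases hσ' with ⟨hσS, hρσ⟩ | ⟨τ₁, hτ₁S, hρτ₁, δ₁, hδ₁f, hρδ₁, rfl⟩
    · rcases hτ' with ⟨hτS, hρτ'⟩ | ⟨τ₂, hτ₂S, hρτ₂, δ₂, hδ₂f, hρδ₂, rfl⟩
      · exact hSint σ' hσS τ' hτS
      · exact mixed σ' hσS hρσ τ₂ hτ₂S hρτ₂ δ₂ hδ₂f hρδ₂
    · rcases hτ' with ⟨hτS, hρτ'⟩ | ⟨τ₂, hτ₂S, hρτ₂, δ₂, hδ₂f, hρδ₂, rfl⟩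
      · have h := mixed τ' hτS hρτ' τ₁ hτ₁S hρτ₁ δ₁ hδ₁f hρδ₁
        exact ⟨by rw [Set.inter_comm]; exact h.2, by rw [Set.inter_comm]; exact h.1⟩
      · constructor
        · exact newnew τ₁ hτ₁S hρτ₁ δ₁ hδ₁f hρδ₁ τ₂ hτ₂S hρτ₂ δ₂ hδ₂f hρδ₂
        · have h := newnew τ₂ hτ₂S hρτ₂ δ₂ hδ₂f hρδ₂ τ₁ hτ₁S hρτ₁ δ₁ hδ₁f hρδ₁
          rw [Set.inter_comm]
          exact h
  exact ⟨⟨hfin, hpoly, hfaceclosure, hinter⟩, hsupport, third⟩
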